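/- Let A be a symmetric, irreducible, row-stochastic, nonnegative n×n real matrix with smallest eigenvalue λ_n, and let Â = [[γA, (1−γ)A],[I, 0]]. If γ ∈ (0,2) and 2γλ_n − λ_n + 1 > 0, then Â is semi-convergent, i.e. lim_{k→∞} Â^k exists and is nonzero. -/

import Mathlib

open Matrix Filter
open scoped NNReal ENNReal


lemma aux_root_bound (b c : ℝ) (hc : |c| < 1) (hb : |b| < 1 - c) (z : ℂ)
    (hz : z ^ 2 = (b : ℂ) * z + (c : ℂ)) : ‖z‖ < 1 := by
  obtain ⟨x, y⟩ := z
  have hre : x ^ 2 - y ^ 2 = b * x + c := by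
    have := congrArg Complex.re hz
    simpa [Complex.mul_re, pow_two] using this
  have him : 2 * x * y = b * y := by
    have := congrArg Complex.im hz
    simp [Complex.mul_im, pow_two] at this
    linarith
  have hcb := abs_lt.mp hc
  have hbb := abs_lt.mp hb
  have hnorm : ‖(⟨x, y⟩ : ℂ)‖ ^ 2 = x ^ 2 + y ^ 2 := by
    rw [← Complex.normSq_eq_norm_sq]
    simp [Complex.normSq_mk, pow_two]
  rcases eq_or_ne y 0 with hy | hy
  · subst hy
    have hx2 : x ^ 2 = b * x + c := by nlinarith
    have h1 : x < 1 := by nlinarith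
    have h2 : -1 < x := by nlinarith
    have hn : ‖(⟨x, 0⟩ : ℂ)‖ ^ 2 < 1 := by rw [hnorm]; nlinarith
    nlinarith [norm_nonneg (⟨x, 0⟩ : ℂ)]
  · have hbx : b = 2 * x := by
      have h' : (2 * x) * y = b * y := by linarith
      exact (mul_right_cancel₀ hy h').symm
    have hsum : x ^ 2 + y ^ 2 = -c := by nlinarith
    have hn : ‖(⟨x, y⟩ : ℂ)‖ ^ 2 < 1 := by rw [hnorm]; nlinarith
    nlinarith [norm_nonneg (⟨x, y⟩ : ℂ)]

section decay

attribute [local instance] Matrix.linftyOpNormedRing Matrix.linftyOpNormedAlgebra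
  Matrix.linftyOpNormedAddCommGroup

noncomputable instance : CompleteSpace (Matrix (Fin 2) (Fin 2) ℂ) :=
  FiniteDimensional.complete ℂ _

-- entry bound
lemma entry_le_norm (M : Matrix (Fin 2) (Fin 2) ℂ) (i j : Fin 2) : ‖M i j‖ ≤ ‖M‖ := by
  rw [Matrix.linfty_opNorm_def]
  calc ‖M i j‖ ≤ ∑ j', ‖M i j'‖ := by
        refine Finset.single_le_sum (fun j' _ => norm_nonneg _) (Finset.mem_univ j)
  _ ≤ _ := by
        have h1 : (∑ j', ‖M i j'‖₊ : ℝ≥0) ≤ Finset.univ.sup fun i => ∑ j', ‖M i j'‖₊ :=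
          Finset.le_sup (f := fun i => ∑ j', ‖M i j'‖₊) (Finset.mem_univ i)
        have := NNReal.coe_le_coe.mpr h1
        simpa [NNReal.coe_sum] using this

lemma aux_cpow_tendsto_zero (M : Matrix (Fin 2) (Fin 2) ℂ)
    (hspec : ∀ μ ∈ spectrum ℂ M, ‖μ‖ < 1) (i j : Fin 2) :
    Tendsto (fun k => (M ^ k) i j) atTop (nhds 0) := by
  have hrad : spectralRadius ℂ M < 1 := by
    have hne : (spectrum ℂ M).Nonempty := spectrum.nonempty M
    have : spectralRadius ℂ M < ((1 : ℝ≥0) : ℝ≥0∞) := by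
      refine spectrum.spectralRadius_lt_of_forall_lt_of_nonempty hne ?_
      intro k hk
      have := hspec k hk
      simpa [← NNReal.coe_lt_coe] using this
    simpa using this
  obtain ⟨ρ, hρ1, hρ2⟩ := ENNReal.lt_iff_exists_nnreal_btwn.mp hrad
  have hgel := spectrum.pow_nnnorm_pow_one_div_tendsto_nhds_spectralRadius M
  have hev : ∀ᶠ k : ℕ in atTop, ((‖M ^ k‖₊ : ℝ≥0∞)) ^ (1 / (k:ℝ)) < (ρ : ℝ≥0∞) :=
    hgel.eventually_lt_const hρ1
  have hbound : ∀ᶠ k : ℕ in atTop, ‖(M ^ k) i j‖ ≤ (ρ : ℝ) ^ k := by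
    filter_upwards [hev, Filter.eventually_ge_atTop 1] with k hk hk1
    have hkne : (k : ℝ) ≠ 0 := by positivity
    have h1 : ((‖M ^ k‖₊ : ℝ≥0∞)) = (((‖M ^ k‖₊ : ℝ≥0∞)) ^ (1 / (k:ℝ))) ^ (k : ℝ) := by
      rw [← ENNReal.rpow_mul, one_div, inv_mul_cancel₀ hkne, ENNReal.rpow_one]
    have h2 : ((‖M ^ k‖₊ : ℝ≥0∞)) < (ρ : ℝ≥0∞) ^ (k : ℝ) := by
      calc ((‖M ^ k‖₊ : ℝ≥0∞)) = (((‖M ^ k‖₊ : ℝ≥0∞)) ^ (1 / (k:ℝ))) ^ (k : ℝ) := h1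
      _ < (ρ : ℝ≥0∞) ^ (k : ℝ) := ENNReal.rpow_lt_rpow hk (by positivity)
    have h3 : ((‖M ^ k‖₊ : ℝ≥0∞)) < ((ρ ^ k : ℝ≥0) : ℝ≥0∞) := by
      rwa [ENNReal.coe_pow, ← ENNReal.rpow_natCast]
    have h4 : ‖M ^ k‖ ≤ (ρ : ℝ) ^ k := by
      have := (ENNReal.coe_lt_coe.mp h3).le
      simpa [← NNReal.coe_le_coe] using this
    exact le_trans (entry_le_norm _ i j) h4
  have hρlt : (ρ : ℝ) < 1 := by exact_mod_cast hρ2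
  exact squeeze_zero_norm' hbound
    (tendsto_pow_atTop_nhds_zero_of_lt_one ρ.coe_nonneg hρlt)

end decay

lemma aux_spec (b c : ℝ) (μ : ℂ) (hμ : μ ∈ spectrum ℂ (!![(b:ℂ), c; 1, 0])) :
    μ ^ 2 = b * μ + c := by
  rw [spectrum.mem_iff] at hμ
  by_contra hne
  apply hμ
  rw [Matrix.isUnit_iff_isUnit_det]
  rw [isUnit_iff_ne_zero]
  intro hdet
  apply hne
  have : (algebraMap ℂ (Matrix (Fin 2) (Fin 2) ℂ)) μ - !![(b:ℂ), c; 1, 0]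
      = !![μ - b, -c; -1, μ] := by
    ext i j
    fin_cases i <;> fin_cases j <;>
      simp [Matrix.algebraMap_matrix_apply]
  rw [this, Matrix.det_fin_two] at hdet
  simp at hdet
  ring_nf
  ring_nf at hdet
  linear_combination hdet

lemma aux_rpow_entry (b c : ℝ) (hc : |c| < 1) (hb : |b| < 1 - c) (i j : Fin 2) :
    Tendsto (fun k => ((!![b, c; 1, 0] : Matrix (Fin 2) (Fin 2) ℝ) ^ k) i j) atTop (nhds 0) := by
  have hmap : (Complex.ofRealHom.mapMatrix : Matrix (Fin 2) (Fin 2) ℝ →+* _) !![b, c; 1, 0]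
      = !![(b:ℂ), c; 1, 0] := by
    ext i j
    fin_cases i <;> fin_cases j <;> simp [RingHom.mapMatrix_apply]
  have hC : ∀ k, ((((!![b, c; 1, 0] : Matrix (Fin 2) (Fin 2) ℝ) ^ k) i j : ℝ) : ℂ)
      = ((!![(b:ℂ), c; 1, 0]) ^ k) i j := by
    intro k
    have h := congrArg (fun M : Matrix (Fin 2) (Fin 2) ℂ => M i j)
      (map_pow (Complex.ofRealHom.mapMatrix : Matrix (Fin 2) (Fin 2) ℝ →+* _) !![b, c; 1, 0] k)
    simp only [hmap] at h
    rw [← h]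
    simp [RingHom.mapMatrix_apply, Matrix.map_apply]
  have hcz := aux_cpow_tendsto_zero (!![(b:ℂ), c; 1, 0])
    (fun μ hμ => aux_root_bound b c hc hb μ (aux_spec b c μ hμ)) i j
  rw [tendsto_zero_iff_norm_tendsto_zero]
  have : (fun k => ‖((!![b, c; 1, 0] : Matrix (Fin 2) (Fin 2) ℝ) ^ k) i j‖)
      = fun k => ‖((!![(b:ℂ), c; 1, 0]) ^ k) i j‖ := by
    funext k
    rw [← hC k, Complex.norm_real]
  rw [this]
  simpa using hcz.norm

lemma aux_one (γ : ℝ) (h0 : 0 < γ) (h2 : γ < 2) (i j : Fin 2) :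
    Tendsto (fun k => ((!![γ, 1 - γ; 1, 0] : Matrix (Fin 2) (Fin 2) ℝ) ^ k) i j) atTop
      (nhds (((2 - γ)⁻¹ • !![1, 1 - γ; 1, 1 - γ] : Matrix (Fin 2) (Fin 2) ℝ) i j)) := by
  set C : Matrix (Fin 2) (Fin 2) ℝ := !![γ, 1 - γ; 1, 0] with hC
  set P : Matrix (Fin 2) (Fin 2) ℝ := (2 - γ)⁻¹ • !![1, 1 - γ; 1, 1 - γ] with hP
  have hγ2 : (2 : ℝ) - γ ≠ 0 := by linarith
  have hCP : C * P = P := by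
    ext a b
    fin_cases a <;> fin_cases b <;>
        simp [hC, hP, Matrix.mul_apply, Fin.sum_univ_two] <;>
        field_simp <;> ring
  have hCQ : C * (1 - P) = (γ - 1) • (1 - P) := by
    have : C * (1 - P) = C - P := by rw [Matrix.mul_sub, Matrix.mul_one, hCP]
    rw [this]
    ext a b
    fin_cases a <;> fin_cases b <;>
        simp [hC, hP, Matrix.one_apply, Matrix.sub_apply] <;>
        field_simp <;> ring
  have hpow : ∀ k, C ^ k = P + (γ - 1) ^ k • (1 - P) := by
    intro k
    induction k with
    | zero => simp
    | succ k ih =>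
      rw [pow_succ', ih, Matrix.mul_add, hCP, Matrix.mul_smul, hCQ, smul_smul, pow_succ']
      ring_nf
  have habs : |γ - 1| < 1 := by rw [abs_lt]; constructor <;> linarith
  have : (fun k => (C ^ k) i j) = fun k => P i j + (γ - 1) ^ k * (1 - P) i j := by
    funext k; rw [hpow k]; simp
  rw [this]
  have h1 : Tendsto (fun k : ℕ => (γ - 1) ^ k * (1 - P) i j) atTop (nhds 0) := by
    simpa using (tendsto_pow_atTop_nhds_zero_of_abs_lt_one habs).mul_const ((1 - P) i j)
  simpa using (tendsto_const_nhds (x := P i j)).add h1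

theorem stmt_9 (n : ℕ) (hn : 2 ≤ n) (A : Matrix (Fin n) (Fin n) ℝ)
    (hnonneg : ∀ i j, 0 ≤ A i j)
    (hrow : ∀ i, ∑ j, A i j = 1)
    (hsym : A.IsSymm)
    (hirr : ∀ i j, 0 < (∑ k ∈ Finset.range n, A ^ k) i j)
    (lamn : ℝ)
    (hlamn : Module.End.HasEigenvalue (Matrix.toLin' A) lamn)
    (hmin : ∀ μ : ℝ, Module.End.HasEigenvalue (Matrix.toLin' A) μ → lamn ≤ μ)
    (γ : ℝ) (hγ : 0 < γ) (hγ' : γ < 2) (hcrit : 2 * γ * lamn - lamn + 1 > 0)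
    (Ahat : Matrix (Fin n ⊕ Fin n) (Fin n ⊕ Fin n) ℝ)
    (hAhat : Ahat = Matrix.fromBlocks (γ • A) ((1 - γ) • A) 1 0) :
    ∃ L : Matrix (Fin n ⊕ Fin n) (Fin n ⊕ Fin n) ℝ,
      Tendsto (fun k => Ahat ^ k) atTop (nhds L) ∧ L ≠ 0 := by
  classical
  have hA : A.IsHermitian := by
    rw [Matrix.IsHermitian, Matrix.conjTranspose_eq_transpose_of_trivial]
    exact hsym
  set U : Matrix (Fin n) (Fin n) ℝ := (hA.eigenvectorUnitary : Matrix (Fin n) (Fin n) ℝ) with hU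
  set d : Fin n → ℝ := hA.eigenvalues with hd
  have hspec : A = U * Matrix.diagonal d * star U := by
    have h := hA.spectral_theorem
    rw [Unitary.conjStarAlgAut_apply] at h
    rw [show (RCLike.ofReal ∘ hA.eigenvalues : Fin n → ℝ) = d from by funext l; simp [hd]] at h
    exact h
  have hUsU : star U * U = 1 := Matrix.mem_unitaryGroup_iff'.mp hA.eigenvectorUnitary.2
  have hUUs : U * star U = 1 := Matrix.mem_unitaryGroup_iff.mp hA.eigenvectorUnitary.2
  -- eigenvalue bounds
  have heig : ∀ l : Fin n, ∃ v : Fin n → ℝ, v ≠ 0 ∧ A *ᵥ v = d l • v := by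
    intro l
    refine ⟨⇑(hA.eigenvectorBasis l), ?_, hA.mulVec_eigenvectorBasis l⟩
    intro hv
    exact hA.eigenvectorBasis.orthonormal.ne_zero l (by ext i; exact congrFun hv i)
  have hdlow : ∀ l, lamn ≤ d l := by
    intro l
    obtain ⟨v, hv0, hv⟩ := heig l
    refine hmin _ (Module.End.hasEigenvalue_of_hasEigenvector ⟨?_, hv0⟩)
    rw [Module.End.mem_eigenspace_iff, Matrix.toLin'_apply]
    exact hv
  have hd1 : ∀ l, |d l| ≤ 1 := by
    intro l
    obtain ⟨v, hv0, hv⟩ := heig l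
    obtain ⟨i0, _, hmax⟩ := Finset.exists_max_image Finset.univ (fun i => |v i|)
      ⟨⟨0, by omega⟩, Finset.mem_univ _⟩
    have hpos : 0 < |v i0| := by
      obtain ⟨i, hi⟩ := Function.ne_iff.mp hv0
      exact lt_of_lt_of_le (abs_pos.mpr hi) (hmax i (Finset.mem_univ i))
    have hkey : |d l| * |v i0| ≤ |v i0| := by
      have h1 : |d l * v i0| = |(A *ᵥ v) i0| := by rw [hv]; simp
      calc |d l| * |v i0| = |d l * v i0| := (abs_mul _ _).symm
        _ = |(A *ᵥ v) i0| := h1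
        _ = |∑ j, A i0 j * v j| := by rw [Matrix.mulVec]; rfl
        _ ≤ ∑ j, |A i0 j * v j| := Finset.abs_sum_le_sum_abs _ _
        _ = ∑ j, A i0 j * |v j| := by
            refine Finset.sum_congr rfl fun j _ => ?_
            rw [abs_mul, abs_of_nonneg (hnonneg i0 j)]
        _ ≤ ∑ j, A i0 j * |v i0| := by
            refine Finset.sum_le_sum fun j _ => ?_
            exact mul_le_mul_of_nonneg_left (hmax j (Finset.mem_univ j)) (hnonneg i0 j)
        _ = |v i0| := by rw [← Finset.sum_mul, hrow i0, one_mul]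
    exact le_of_mul_le_mul_right (by simpa using hkey) hpos
  -- companion matrices
  set Cm : ℝ → Matrix (Fin 2) (Fin 2) ℝ := fun lam => !![γ * lam, (1 - γ) * lam; 1, 0] with hCm
  set F : ℕ → Fin 2 → Fin 2 → Matrix (Fin n) (Fin n) ℝ :=
    fun k a b => U * Matrix.diagonal (fun l => (Cm (d l) ^ k) a b) * star U with hF
  have hUdU : ∀ f g : Fin n → ℝ,
      (U * Matrix.diagonal f * star U) * (U * Matrix.diagonal g * star U)
        = U * Matrix.diagonal (fun l => f l * g l) * star U := by
    intro f g
    calc (U * Matrix.diagonal f * star U) * (U * Matrix.diagonal g * star U)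
        = U * Matrix.diagonal f * (star U * U) * Matrix.diagonal g * star U := by
          simp only [Matrix.mul_assoc]
      _ = U * (Matrix.diagonal f * Matrix.diagonal g) * star U := by
          rw [hUsU]; simp only [Matrix.mul_one, Matrix.mul_assoc]
      _ = _ := by rw [Matrix.diagonal_mul_diagonal]
  have hAF : ∀ f : Fin n → ℝ, A * (U * Matrix.diagonal f * star U)
      = U * Matrix.diagonal (fun l => d l * f l) * star U := by
    intro f
    rw [hspec, hUdU]
  have hCstep : ∀ (lam : ℝ) (k : ℕ) (b : Fin 2),
      ((Cm lam ^ (k + 1)) 0 b = γ * lam * (Cm lam ^ k) 0 b + (1 - γ) * lam * (Cm lam ^ k) 1 b)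
      ∧ (Cm lam ^ (k + 1)) 1 b = (Cm lam ^ k) 0 b := by
    intro lam k b
    constructor <;>
      · rw [pow_succ']
        simp [hCm, Matrix.mul_apply, Fin.sum_univ_two]
  have hsmul : ∀ (c : ℝ) (f : Fin n → ℝ),
      c • (U * Matrix.diagonal f * star U) = U * Matrix.diagonal (fun l => c * f l) * star U := by
    intro c f
    have hdg : Matrix.diagonal (fun l => c * f l) = c • Matrix.diagonal f := by
      ext i j
      by_cases h : i = j <;> simp [Matrix.diagonal_apply, h]
    rw [hdg, Matrix.mul_smul, Matrix.smul_mul]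
  have hadd : ∀ f g : Fin n → ℝ,
      (U * Matrix.diagonal f * star U) + (U * Matrix.diagonal g * star U)
        = U * Matrix.diagonal (fun l => f l + g l) * star U := by
    intro f g
    have hdg : Matrix.diagonal (fun l => f l + g l)
        = Matrix.diagonal f + Matrix.diagonal g := by
      ext i j
      by_cases h : i = j <;> simp [Matrix.diagonal_apply, h]
    rw [hdg, Matrix.mul_add, Matrix.add_mul]
  have key : ∀ k, Ahat ^ k = Matrix.fromBlocks (F k 0 0) (F k 0 1) (F k 1 0) (F k 1 1) := by
    intro k
    induction k with
    | zero =>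
      have hF0 : ∀ a b : Fin 2, F 0 a b = if a = b then 1 else 0 := by
        intro a b
        simp only [hF, pow_zero, Matrix.one_apply]
        by_cases hab : a = b
        · simp [hab, hUUs]
        · simp [hab]
      rw [pow_zero, hF0, hF0, hF0, hF0]
      norm_num [Matrix.fromBlocks_one]
    | succ k ih =>
      have hTB : ∀ b : Fin 2, γ • A * F k 0 b + (1 - γ) • A * F k 1 b = F (k + 1) 0 b := by
        intro b
        simp only [hF]
        rw [Matrix.smul_mul, Matrix.smul_mul, hAF, hAF, hsmul, hsmul, hadd]
        have hfun : (fun l => γ * (d l * (Cm (d l) ^ k) 0 b)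
              + (1 - γ) * (d l * (Cm (d l) ^ k) 1 b))
            = fun l => (Cm (d l) ^ (k + 1)) 0 b := by
          funext l
          rw [(hCstep (d l) k b).1]
          ring
        rw [hfun]
      have hBB : ∀ b : Fin 2,
          (1 : Matrix (Fin n) (Fin n) ℝ) * F k 0 b + 0 * F k 1 b = F (k + 1) 1 b := by
        intro b
        rw [Matrix.one_mul, Matrix.zero_mul, add_zero]
        simp only [hF]
        have hfun : (fun l => (Cm (d l) ^ (k + 1)) 1 b) = fun l => (Cm (d l) ^ k) 0 b :=
          funext fun l => (hCstep (d l) k b).2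
        rw [hfun]
      rw [pow_succ', ih, hAhat, Matrix.fromBlocks_multiply, hTB 0, hTB 1, hBB 0, hBB 1]
  -- scalar limits
  have habs1γ : |1 - γ| < 1 := by rw [abs_lt]; constructor <;> linarith
  have sc : ∀ (l : Fin n) (a b : Fin 2),
      ∃ lim : ℝ, Tendsto (fun k => (Cm (d l) ^ k) a b) atTop (nhds lim) := by
    intro l a b
    have hle1 : d l ≤ 1 := (abs_le.mp (hd1 l)).2
    have hge1 : -1 ≤ d l := (abs_le.mp (hd1 l)).1
    by_cases hdl : d l = 1
    · have hCd : Cm (d l) = !![γ, 1 - γ; 1, 0] := by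
        simp only [hCm, hdl]
        ext a' b'
        fin_cases a' <;> fin_cases b' <;> norm_num
      exact ⟨_, by rw [hCd]; exact aux_one γ hγ hγ' a b⟩
    · have hlt1 : d l < 1 := lt_of_le_of_ne hle1 hdl
      have hcc : |(1 - γ) * d l| < 1 := by
        rw [abs_mul]
        calc |1 - γ| * |d l| ≤ |1 - γ| * 1 := by
              exact mul_le_mul_of_nonneg_left (hd1 l) (abs_nonneg _)
          _ < 1 := by rw [mul_one]; exact habs1γ
      have h2pos : 0 < 1 + (2 * γ - 1) * d l := by
        rcases le_total 0 (2 * γ - 1) with h | h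
        · nlinarith [mul_le_mul_of_nonneg_left (hdlow l) h]
        · nlinarith [mul_le_mul_of_nonpos_left hle1 h]
      have hbb : |γ * d l| < 1 - (1 - γ) * d l := by
        rw [abs_lt]
        constructor <;> nlinarith
      have hCd : Cm (d l) = !![γ * d l, (1 - γ) * d l; 1, 0] := by simp only [hCm]
      exact ⟨0, by rw [hCd]; exact aux_rpow_entry (γ * d l) ((1 - γ) * d l) hcc hbb a b⟩
  choose Ls hLs using sc
  -- entrywise limits of F
  have hentry : ∀ (f : Fin n → ℝ) (i j : Fin n),
      (U * Matrix.diagonal f * star U) i j = ∑ l, U i l * f l * U j l := by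
    intro f i j
    rw [Matrix.mul_apply]
    refine Finset.sum_congr rfl fun l _ => ?_
    rw [Matrix.mul_diagonal, Matrix.star_apply, star_trivial]
  set G : Fin 2 → Fin 2 → Matrix (Fin n) (Fin n) ℝ :=
    fun a b => U * Matrix.diagonal (fun l => Ls l a b) * star U with hG
  have hFt : ∀ (a b : Fin 2) (i j : Fin n),
      Tendsto (fun k => F k a b i j) atTop (nhds (G a b i j)) := by
    intro a b i j
    have e1 : (fun k => F k a b i j) = fun k => ∑ l, U i l * (Cm (d l) ^ k) a b * U j l := by
      funext k
      simp only [hF]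
      exact hentry _ i j
    rw [e1, hG]
    simp only
    rw [hentry _ i j]
    exact tendsto_finset_sum _ fun l _ => ((hLs l a b).const_mul (U i l)).mul_const (U j l)
  set L : Matrix (Fin n ⊕ Fin n) (Fin n ⊕ Fin n) ℝ :=
    Matrix.fromBlocks (G 0 0) (G 0 1) (G 1 0) (G 1 1) with hL
  have hmain : Tendsto (fun k => Ahat ^ k) atTop (nhds L) := by
    refine tendsto_pi_nhds.2 fun p => tendsto_pi_nhds.2 fun q => ?_
    have e2 : ∀ k, (Ahat ^ k) p q
        = Matrix.fromBlocks (F k 0 0) (F k 0 1) (F k 1 0) (F k 1 1) p q := by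
      intro k; rw [key k]
    simp only [e2, hL]
    rcases p with i | i <;> rcases q with j | j <;>
      simp only [Matrix.fromBlocks_apply₁₁, Matrix.fromBlocks_apply₁₂,
        Matrix.fromBlocks_apply₂₁, Matrix.fromBlocks_apply₂₂] <;>
      exact hFt _ _ i j
  -- nonzero
  refine ⟨L, hmain, ?_⟩
  set w : Fin n ⊕ Fin n → ℝ := fun _ => 1 with hwdef
  have hw : Ahat *ᵥ w = w := by
    funext p
    rcases p with i | i
    · rw [hAhat]
      show ∑ q, Matrix.fromBlocks (γ • A) ((1 - γ) • A) 1 0 (Sum.inl i) q * w q = 1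
      rw [Fintype.sum_sum_type]
      simp only [Matrix.fromBlocks_apply₁₁, Matrix.fromBlocks_apply₁₂, Matrix.smul_apply,
        smul_eq_mul, hwdef, mul_one]
      rw [← Finset.mul_sum, ← Finset.mul_sum, hrow i]
      ring
    · rw [hAhat]
      show ∑ q, Matrix.fromBlocks (γ • A) ((1 - γ) • A) 1 0 (Sum.inr i) q * w q = 1
      rw [Fintype.sum_sum_type]
      simp [Matrix.one_apply, hwdef]
  have hwk : ∀ k, (Ahat ^ k) *ᵥ w = w := by
    intro k
    induction k with
    | zero => simp
    | succ k ih => rw [pow_succ', ← Matrix.mulVec_mulVec, ih, hw]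
  have hLw : ∀ p, ∑ q, L p q * w q = 1 := by
    intro p
    have h1 : Tendsto (fun k => ∑ q, (Ahat ^ k) p q * w q) atTop (nhds (∑ q, L p q * w q)) := by
      refine tendsto_finset_sum _ fun q _ => ?_
      exact ((tendsto_pi_nhds.1 (tendsto_pi_nhds.1 hmain p)) q).mul_const (w q)
    have h2 : (fun k => ∑ q, (Ahat ^ k) p q * w q) = fun _ => 1 := by
      funext k
      have h := congrFun (hwk k) p
      calc ∑ q, (Ahat ^ k) p q * w q = (Ahat ^ k *ᵥ w) p := rfl
        _ = w p := h
        _ = 1 := rfl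
    rw [h2] at h1
    exact tendsto_nhds_unique h1 tendsto_const_nhds
  intro h0
  have := hLw (Sum.inl ⟨0, by omega⟩)
  rw [h0] at this
  simp at this
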